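/- For every q ∈ (0,1), the means a_n := ∫ z dμ_n(z) are submultiplicative: a_{n+m} ≤ a_n · a_m for all n, m ≥ 0. Consequently the limit α(q) := lim_{n→∞} (1/n)·log a_n exists and satisfies 0 ≤ α(q) ≤ log 2. -/

import Mathlib

open MeasureTheory ProbabilityTheory Filter

noncomputable def Sfun : ℝ × ℝ → ℝ := fun p => p.1 + p.2

noncomputable def Dfun : ℝ × ℝ × ℝ × ℝ → ℝ := fun p =>
  ((p.1 + p.2.1) * (p.2.2.1 + p.2.2.2)) / (p.1 + p.2.1 + p.2.2.1 + p.2.2.2)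

/-- One-step resistance recursion map on Borel measures on ℝ. -/
noncomputable def Tq (q : ℝ) (μ : Measure ℝ) : Measure ℝ :=
  ENNReal.ofReal (1 - q) • Measure.map Sfun (μ.prod μ) +
    ENNReal.ofReal q • Measure.map Dfun (μ.prod (μ.prod (μ.prod μ)))

/-- μₙ = T_qⁿ δ₁ : law of the two-terminal resistance after n replacement steps. -/
noncomputable def mu (q : ℝ) (n : ℕ) : Measure ℝ := (Tq q)^[n] (Measure.dirac 1)

namespace RQAux

/-- parallel combination -/
noncomputable def Pop : ℝ × ℝ → ℝ := fun p => p.1 * p.2 / (p.1 + p.2)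

lemma measurable_Sfun : Measurable Sfun := by
  unfold Sfun; exact measurable_fst.add measurable_snd

lemma measurable_Pop : Measurable Pop := by
  unfold Pop; exact (measurable_fst.mul measurable_snd).div (measurable_fst.add measurable_snd)

lemma measurable_Dfun : Measurable Dfun := by
  unfold Dfun
  have h1 : Measurable fun p : ℝ × ℝ × ℝ × ℝ => p.1 + p.2.1 :=
    measurable_fst.add measurable_snd.fst
  have h2 : Measurable fun p : ℝ × ℝ × ℝ × ℝ => p.2.2.1 + p.2.2.2 :=
    (measurable_snd.snd.fst).add (measurable_snd.snd.snd)
  have h3 : Measurable fun p : ℝ × ℝ × ℝ × ℝ => p.1 + p.2.1 + p.2.2.1 + p.2.2.2 :=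
    ((measurable_fst.add measurable_snd.fst).add measurable_snd.snd.fst).add
      measurable_snd.snd.snd
  exact (h1.mul h2).div h3

/-- probability measure supported in `[t, C]` -/
def Lawful (t C : ℝ) (ν : Measure ℝ) : Prop :=
  IsProbabilityMeasure ν ∧ ν (Set.Icc t C)ᶜ = 0

/-- test functions for the increasing concave order anchored at `t` -/
def TestF (t : ℝ) (f : ℝ → ℝ) : Prop :=
  Measurable f ∧ MonotoneOn f (Set.Ici t) ∧ ConcaveOn ℝ (Set.Ici t) f

/-- increasing concave stochastic order -/
def Ord (t : ℝ) (ν ρ : Measure ℝ) : Prop :=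
  ∀ f : ℝ → ℝ, TestF t f → ∫ z, f z ∂ν ≤ ∫ z, f z ∂ρ

lemma Lawful.ae {t C : ℝ} {ν : Measure ℝ} (h : Lawful t C ν) :
    ∀ᵐ z ∂ν, z ∈ Set.Icc t C := by
  rw [MeasureTheory.ae_iff]
  exact h.2

lemma Lawful.mono {t C C' : ℝ} {ν : Measure ℝ} (h : Lawful t C ν) (hC : C ≤ C') :
    Lawful t C' ν :=
  ⟨h.1, measure_mono_null (Set.compl_subset_compl.2 (Set.Icc_subset_Icc le_rfl hC)) h.2⟩

lemma lawful_dirac {a : ℝ} (ha : 1 ≤ a) : Lawful 1 a (Measure.dirac a) := by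
  refine ⟨inferInstance, ?_⟩
  rw [Measure.dirac_apply' _ (measurableSet_Icc.compl)]
  simp [Set.indicator, ha]

/-- bounded measurable functions are integrable w.r.t. lawful measures -/
lemma Lawful.integrable {t C : ℝ} {ν : Measure ℝ} (h : Lawful t C ν) {f : ℝ → ℝ}
    (hf : AEStronglyMeasurable f ν) {M : ℝ} (hb : ∀ z ∈ Set.Icc t C, |f z| ≤ M) :
    Integrable f ν := by
  haveI := h.1
  refine Integrable.mono' (integrable_const M) hf ?_
  filter_upwards [h.ae] with z hz
  simpa [Real.norm_eq_abs] using hb z hz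

lemma TestF.bound {t s K : ℝ} {f : ℝ → ℝ} (hf : TestF t f) (hts : t ≤ s) (hsK : s ≤ K)
    {z : ℝ} (hz : z ∈ Set.Icc s K) : |f z| ≤ max |f s| |f K| := by
  have hzt : z ∈ Set.Ici t := Set.mem_Ici.mpr (hts.trans hz.1)
  have h1 : f s ≤ f z := hf.2.1 (Set.mem_Ici.mpr hts) hzt hz.1
  have h2 : f z ≤ f K := hf.2.1 hzt (Set.mem_Ici.mpr (hts.trans (hz.1.trans hz.2))) hz.2
  have := neg_abs_le (f s)
  have := le_abs_self (f K)
  have := le_max_left |f s| |f K|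
  have := le_max_right |f s| |f K|
  rw [abs_le]
  constructor <;> linarith

lemma TestF.weaken {t t' : ℝ} {f : ℝ → ℝ} (hf : TestF t f) (h : t ≤ t') : TestF t' f :=
  ⟨hf.1, hf.2.1.mono (Set.Ici_subset_Ici.mpr h),
    hf.2.2.subset (Set.Ici_subset_Ici.mpr h) (convex_Ici t')⟩

lemma concaveOn_congr {s : Set ℝ} {f g : ℝ → ℝ} (hf : ConcaveOn ℝ s f)
    (h : Set.EqOn f g s) : ConcaveOn ℝ s g := by
  refine ⟨hf.1, fun x hx y hy a b ha hb hab => ?_⟩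
  have hm : a • x + b • y ∈ s := hf.1 hx hy ha hb hab
  rw [← h hx, ← h hy, ← h hm]
  exact hf.2 hx hy ha hb hab

/-- composition of a test function with a monotone concave map into the domain -/
lemma TestF.comp {t s : ℝ} {f g : ℝ → ℝ} (hf : TestF s f) (hgmeas : Measurable g)
    (hgmono : MonotoneOn g (Set.Ici t)) (hgconc : ConcaveOn ℝ (Set.Ici t) g)
    (hrange : ∀ x ∈ Set.Ici t, g x ∈ Set.Ici s) : TestF t (fun x => f (g x)) := by
  refine ⟨hf.1.comp hgmeas, ?_, ?_⟩
  · intro x hx y hy hxy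
    exact hf.2.1 (hrange x hx) (hrange y hy) (hgmono hx hy hxy)
  · refine ⟨convex_Ici t, fun x hx y hy a b ha hb hab => ?_⟩
    have hm : a • x + b • y ∈ Set.Ici t := (convex_Ici t) hx hy ha hb hab
    have h1 : a • g x + b • g y ≤ g (a • x + b • y) := hgconc.2 hx hy ha hb hab
    have h2 : a • g x + b • g y ∈ Set.Ici s := by
      have hgx := hrange x hx
      have hgy := hrange y hy
      simp only [Set.mem_Ici, smul_eq_mul] at *
      have h3 : a * s + b * s = s := by linear_combination s * hab
      nlinarith [mul_le_mul_of_nonneg_left hgx ha, mul_le_mul_of_nonneg_left hgy hb]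
    calc a • f (g x) + b • f (g y) ≤ f (a • g x + b • g y) :=
          hf.2.2.2 (hrange x hx) (hrange y hy) ha hb hab
      _ ≤ f (g (a • x + b • y)) := hf.2.1 h2 (hrange _ hm) h1

/-- a symmetric binary operation suitable for the order-preservation argument.
`t` : anchor of inputs, `s` : anchor of outputs, `k` : growth factor of support bound. -/
structure GoodOp (t s k : ℝ) (op : ℝ × ℝ → ℝ) : Prop where
  meas : Measurable op
  symm : ∀ x y, op (x, y) = op (y, x)
  mono : ∀ y ∈ Set.Ici t, MonotoneOn (fun x => op (x, y)) (Set.Ici t)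
  conc : ∀ y ∈ Set.Ici t, ConcaveOn ℝ (Set.Ici t) (fun x => op (x, y))
  mem : ∀ x ∈ Set.Ici t, ∀ y ∈ Set.Ici t, s ≤ op (x, y)
  ub : ∀ C, t ≤ C → ∀ x ∈ Set.Icc t C, ∀ y ∈ Set.Icc t C, op (x, y) ≤ k * C
  hk : 0 < k

lemma goodOp_add {t : ℝ} (ht : 0 < t) : GoodOp t (2 * t) 2 Sfun := by
  refine ⟨measurable_Sfun, ?_, ?_, ?_, ?_, ?_, by norm_num⟩
  · intro x y; simp [Sfun, add_comm]
  · intro y _ x _ x' _ hxx'; simp only [Sfun]; linarith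
  · intro y _
    refine ⟨convex_Ici t, fun x hx x' hx' a b ha hb hab => ?_⟩
    simp only [Sfun, smul_eq_mul]
    have h : a * (x + y) + b * (x' + y) = a * x + b * x' + y := by linear_combination y * hab
    exact le_of_eq h
  · intro x hx y hy; simp only [Sfun, Set.mem_Ici] at *; linarith
  · intro C _ x hx y hy; simp only [Sfun, Set.mem_Icc] at *; linarith

lemma goodOp_Pop : GoodOp 2 1 (1/2) Pop := by
  have key : ∀ x : ℝ, 2 ≤ x → ∀ y : ℝ, 2 ≤ y → ∀ x' : ℝ, 2 ≤ x' → x ≤ x' →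
      x * y / (x + y) ≤ x' * y / (x' + y) := by
    intro x hx y hy x' hx' hxx'
    rw [div_le_div_iff₀ (by linarith) (by linarith)]
    nlinarith [mul_le_mul_of_nonneg_right hxx'
      (mul_nonneg (by linarith : (0:ℝ) ≤ y) (by linarith : (0:ℝ) ≤ y))]
  refine ⟨measurable_Pop, ?_, ?_, ?_, ?_, ?_, by norm_num⟩
  · intro x y; simp only [Pop]; rw [mul_comm, add_comm]
  · intro y hy x hx x' hx' hxx'
    exact key x hx y hy x' hx' hxx'
  · intro y hy
    refine ⟨convex_Ici 2, fun x hx z hz a b ha hb hab => ?_⟩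
    simp only [Pop, smul_eq_mul, Set.mem_Ici] at *
    have hxy : (0:ℝ) < x + y := by linarith
    have hzy : (0:ℝ) < z + y := by linarith
    have hm : (0:ℝ) < (a * x + b * z) + y := by nlinarith
    have e1 : a * (x * y / (x + y)) = a * (x * y) / (x + y) := by ring
    have e2 : b * (z * y / (z + y)) = b * (z * y) / (z + y) := by ring
    have hb' : b = 1 - a := by linarith
    subst hb'
    rw [e1, e2, div_add_div _ _ (ne_of_gt hxy) (ne_of_gt hzy),
      div_le_div_iff₀ (by positivity) hm]
    nlinarith [mul_nonneg (mul_nonneg ha hb) (sq_nonneg ((x - z) * y))]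
  · intro x hx y hy
    simp only [Pop, Set.mem_Ici] at *
    rw [le_div_iff₀ (by linarith)]
    nlinarith
  · intro C hC x hx y hy
    simp only [Pop, Set.mem_Icc] at *
    rw [div_le_iff₀ (by linarith)]
    nlinarith [hx.1, hx.2, hy.1, hy.2]

lemma prod_box_null {ν₁ ν₂ : Measure ℝ} [SFinite ν₂] {A B : Set ℝ}
    (hA : MeasurableSet A) (hB : MeasurableSet B) (h1 : ν₁ Aᶜ = 0) (h2 : ν₂ Bᶜ = 0) :
    (ν₁.prod ν₂) (A ×ˢ B)ᶜ = 0 := by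
  rw [Set.compl_prod_eq_union]
  refine measure_union_null ?_ ?_
  · rw [Measure.prod_prod, h1, zero_mul]
  · rw [Measure.prod_prod, h2, mul_zero]

lemma prod_box_ae {ν₁ ν₂ : Measure ℝ} [SFinite ν₂] {A B : Set ℝ}
    (hA : MeasurableSet A) (hB : MeasurableSet B) (h1 : ν₁ Aᶜ = 0) (h2 : ν₂ Bᶜ = 0) :
    ∀ᵐ p ∂(ν₁.prod ν₂), p.1 ∈ A ∧ p.2 ∈ B := by
  rw [MeasureTheory.ae_iff]
  have : {p : ℝ × ℝ | ¬(p.1 ∈ A ∧ p.2 ∈ B)} = (A ×ˢ B)ᶜ := by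
    ext p; simp [Set.mem_prod]
  rw [this]
  exact prod_box_null hA hB h1 h2

lemma integrable_on_prod {t C C' : ℝ} {ν₁ ν₂ : Measure ℝ}
    (h1 : Lawful t C ν₁) (h2 : Lawful t C' ν₂) {g : ℝ × ℝ → ℝ} (hg : Measurable g)
    {M : ℝ} (hb : ∀ x ∈ Set.Icc t C, ∀ y ∈ Set.Icc t C', |g (x, y)| ≤ M) :
    Integrable g (ν₁.prod ν₂) := by
  haveI := h1.1; haveI := h2.1
  refine Integrable.mono' (integrable_const M) hg.aestronglyMeasurable ?_
  filter_upwards [prod_box_ae measurableSet_Icc measurableSet_Icc h1.2 h2.2] with p hp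
  simpa [Real.norm_eq_abs] using hb p.1 hp.1 p.2 hp.2

/-- The core exchange lemma: the increasing concave order is preserved under applying a
good symmetric binary operation to two independent copies. -/
lemma bin_le {t s k C C' : ℝ} {op : ℝ × ℝ → ℝ} (hop : GoodOp t s k op)
    (htC : t ≤ C) (htC' : t ≤ C') {ν ρ : Measure ℝ}
    (hν : Lawful t C ν) (hρ : Lawful t C' ρ) (hord : Ord t ν ρ)
    {f : ℝ → ℝ} (hf : TestF s f) :
    ∫ p, f (op p) ∂(ν.prod ν) ≤ ∫ p, f (op p) ∂(ρ.prod ρ) := by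
  haveI := hν.1; haveI := hρ.1
  set Cm : ℝ := max C C' with hCm
  have htCm : t ≤ Cm := le_trans htC (le_max_left _ _)
  have hνm : Lawful t Cm ν := hν.mono (le_max_left _ _)
  have hρm : Lawful t Cm ρ := hρ.mono (le_max_right _ _)
  set K : ℝ := max s (k * Cm) with hK
  have hmemIcc : ∀ x ∈ Set.Icc t Cm, ∀ y ∈ Set.Icc t Cm, op (x, y) ∈ Set.Icc s K := by
    intro x hx y hy
    exact ⟨hop.mem x (Set.mem_Ici.mpr hx.1) y (Set.mem_Ici.mpr hy.1),
      le_trans (hop.ub Cm htCm x hx y hy) (le_max_right _ _)⟩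
  set M : ℝ := max |f s| |f K| with hM
  have hbound : ∀ x ∈ Set.Icc t Cm, ∀ y ∈ Set.Icc t Cm, |f (op (x, y))| ≤ M := by
    intro x hx y hy
    exact hf.bound le_rfl (le_max_left _ _) (hmemIcc x hx y hy)
  set g : ℝ × ℝ → ℝ := fun p => f (op p) with hg
  have hgmeas : Measurable g := hf.1.comp hop.meas
  have hgint : ∀ {μ₁ μ₂ : Measure ℝ}, Lawful t Cm μ₁ → Lawful t Cm μ₂ →
      Integrable g (μ₁.prod μ₂) := by
    intro μ₁ μ₂ h1 h2
    exact integrable_on_prod h1 h2 hgmeas (fun x hx y hy => hbound x hx y hy)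
  have hslice : ∀ x ∈ Set.Ici t, TestF t (fun y => g (x, y)) := by
    intro x hx
    have he : (fun y => op (x, y)) = fun y => op (y, x) := funext fun y => hop.symm x y
    have hm : Measurable fun y => op (x, y) :=
      hop.meas.comp (measurable_const.prodMk measurable_id)
    have hmono : MonotoneOn (fun y => op (x, y)) (Set.Ici t) := by
      rw [he]; exact hop.mono x hx
    have hconc : ConcaveOn ℝ (Set.Ici t) (fun y => op (x, y)) := by
      rw [he]; exact hop.conc x hx
    exact hf.comp hm hmono hconc (fun y hy => Set.mem_Ici.mpr (hop.mem x hx y hy))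
  have key : ∀ (μ₁ : Measure ℝ), Lawful t Cm μ₁ →
      ∫ p, g p ∂(μ₁.prod ν) ≤ ∫ p, g p ∂(μ₁.prod ρ) := by
    intro μ₁ h1
    haveI := h1.1
    rw [integral_prod _ (hgint h1 hνm), integral_prod _ (hgint h1 hρm)]
    refine integral_mono_ae ((hgint h1 hνm).integral_prod_left)
      ((hgint h1 hρm).integral_prod_left) ?_
    filter_upwards [h1.ae] with x hx
    exact hord _ (hslice x (Set.mem_Ici.mpr hx.1))
  have hswap : ∫ p, g p ∂(ν.prod ρ) = ∫ p, g p ∂(ρ.prod ν) := by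
    have hsym : ∀ p : ℝ × ℝ, g p.swap = g p := by
      intro p; simp only [g, Prod.swap]; rw [hop.symm]
    rw [← MeasureTheory.integral_prod_swap g]
    simp_rw [hsym]
  calc ∫ p, g p ∂(ν.prod ν) ≤ ∫ p, g p ∂(ν.prod ρ) := key ν hνm
    _ = ∫ p, g p ∂(ρ.prod ν) := hswap
    _ ≤ ∫ p, g p ∂(ρ.prod ρ) := key ρ hρm

/-- lawfulness of the pushforward under a good binary operation -/
lemma lawful_map_bin {t s k C : ℝ} {op : ℝ × ℝ → ℝ} (hop : GoodOp t s k op)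
    (htC : t ≤ C) {ν₁ ν₂ : Measure ℝ} (h1 : Lawful t C ν₁) (h2 : Lawful t C ν₂) :
    Lawful s (k * C) (Measure.map op (ν₁.prod ν₂)) := by
  haveI := h1.1; haveI := h2.1
  refine ⟨Measure.isProbabilityMeasure_map hop.meas.aemeasurable, ?_⟩
  rw [Measure.map_apply hop.meas (measurableSet_Icc.compl)]
  refine measure_mono_null ?_ (prod_box_null measurableSet_Icc measurableSet_Icc h1.2 h2.2)
  intro p hp
  simp only [Set.mem_preimage, Set.mem_compl_iff] at hp ⊢
  intro hmem
  exact hp ⟨hop.mem p.1 (Set.mem_Ici.mpr hmem.1.1) p.2 (Set.mem_Ici.mpr hmem.2.1),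
    hop.ub C htC p.1 hmem.1 p.2 hmem.2⟩

/-- the series part: law of the sum of two independent copies -/
noncomputable def sig (ν : Measure ℝ) : Measure ℝ := Measure.map Sfun (ν.prod ν)

lemma Lawful.monoAnchor {t t' C : ℝ} {ν : Measure ℝ} (h : Lawful t C ν) (ht : t' ≤ t) :
    Lawful t' C ν :=
  ⟨h.1, measure_mono_null (Set.compl_subset_compl.2 (Set.Icc_subset_Icc ht le_rfl)) h.2⟩

lemma map_Dfun_eq (ν : Measure ℝ) [SFinite ν] :
    Measure.map Dfun (ν.prod (ν.prod (ν.prod ν))) =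
      Measure.map Pop ((sig ν).prod (sig ν)) := by
  have h1 : (sig ν).prod (sig ν) =
      Measure.map (Prod.map Sfun Sfun) ((ν.prod ν).prod (ν.prod ν)) :=
    Measure.map_prod_map _ _ measurable_Sfun measurable_Sfun
  have h2 : ν.prod (ν.prod (ν.prod ν)) =
      Measure.map (MeasurableEquiv.prodAssoc : (ℝ × ℝ) × ℝ × ℝ ≃ᵐ ℝ × ℝ × ℝ × ℝ)
        ((ν.prod ν).prod (ν.prod ν)) := (Measure.prodAssoc_prod).symm
  rw [h1, h2, Measure.map_map measurable_Dfun (MeasurableEquiv.prodAssoc).measurable,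
    Measure.map_map measurable_Pop (measurable_Sfun.prodMap measurable_Sfun)]
  congr 1
  funext p
  obtain ⟨⟨x1, x2⟩, x3, x4⟩ := p
  simp only [Function.comp_apply, MeasurableEquiv.prodAssoc, MeasurableEquiv.coe_mk,
    Equiv.prodAssoc_apply, Dfun, Pop, Sfun, Prod.map_apply]
  congr 1
  ring

lemma Tq_eq (q : ℝ) (ν : Measure ℝ) [SFinite ν] :
    Tq q ν = ENNReal.ofReal (1 - q) • sig ν +
      ENNReal.ofReal q • Measure.map Pop ((sig ν).prod (sig ν)) := by
  unfold Tq
  rw [map_Dfun_eq]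
  rfl

lemma integrable_comp_op {t s k C C' s' : ℝ} {op : ℝ × ℝ → ℝ} (hop : GoodOp t s k op)
    (htC : t ≤ C) (htC' : t ≤ C') {ν₁ ν₂ : Measure ℝ}
    (h1 : Lawful t C ν₁) (h2 : Lawful t C' ν₂) {f : ℝ → ℝ} (hf : TestF s' f) (hs' : s' ≤ s) :
    Integrable (fun p => f (op p)) (ν₁.prod ν₂) := by
  set Cm : ℝ := max C C' with hCm
  set K : ℝ := max s (k * Cm) with hK
  refine integrable_on_prod h1 h2 (hf.1.comp hop.meas) (M := max |f s| |f K|) ?_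
  intro x hx y hy
  have hx' : x ∈ Set.Icc t Cm := ⟨hx.1, hx.2.trans (le_max_left _ _)⟩
  have hy' : y ∈ Set.Icc t Cm := ⟨hy.1, hy.2.trans (le_max_right _ _)⟩
  have hz : op (x, y) ∈ Set.Icc s K :=
    ⟨hop.mem x (Set.mem_Ici.mpr hx.1) y (Set.mem_Ici.mpr hy.1),
      le_trans (hop.ub Cm (htC.trans (le_max_left _ _)) x hx' y hy') (le_max_right _ _)⟩
  exact hf.bound hs' (le_max_left _ _) hz

lemma integral_sig {ν : Measure ℝ} [SFinite ν] {f : ℝ → ℝ} (hfm : Measurable f) :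
    ∫ z, f z ∂(sig ν) = ∫ p, f (Sfun p) ∂(ν.prod ν) :=
  integral_map measurable_Sfun.aemeasurable hfm.aestronglyMeasurable

lemma integral_Tq {q : ℝ} (hq0 : 0 ≤ q) (hq1 : q ≤ 1) {ν : Measure ℝ} [SFinite ν]
    {f : ℝ → ℝ} (hfm : Measurable f)
    (h1 : Integrable (fun p => f (Sfun p)) (ν.prod ν))
    (h2 : Integrable (fun p => f (Pop p)) ((sig ν).prod (sig ν))) :
    ∫ z, f z ∂(Tq q ν) = (1 - q) * ∫ p, f (Sfun p) ∂(ν.prod ν) +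
      q * ∫ p, f (Pop p) ∂((sig ν).prod (sig ν)) := by
  have hι1 : Integrable f (sig ν) :=
    (integrable_map_measure hfm.aestronglyMeasurable measurable_Sfun.aemeasurable).mpr h1
  have hι2 : Integrable f (Measure.map Pop ((sig ν).prod (sig ν))) :=
    (integrable_map_measure hfm.aestronglyMeasurable measurable_Pop.aemeasurable).mpr h2
  rw [Tq_eq]
  rw [integral_add_measure (hι1.smul_measure ENNReal.ofReal_ne_top)
    (hι2.smul_measure ENNReal.ofReal_ne_top), integral_smul_measure, integral_smul_measure,
    ENNReal.toReal_ofReal (by linarith), ENNReal.toReal_ofReal hq0,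
    integral_sig hfm, integral_map measurable_Pop.aemeasurable hfm.aestronglyMeasurable]
  simp [smul_eq_mul]

lemma lawful_sig {C : ℝ} (h1C : 1 ≤ C) {ν : Measure ℝ} (hν : Lawful 1 C ν) :
    Lawful 2 (2 * C) (sig ν) := by
  haveI := hν.1
  have := lawful_map_bin (goodOp_add one_pos) h1C hν hν
  simpa [sig, mul_one] using this

lemma lawful_Tq {q C : ℝ} (hq : q ∈ Set.Ioo (0:ℝ) 1) (h1C : 1 ≤ C) {ν : Measure ℝ}
    (hν : Lawful 1 C ν) : Lawful 1 (2 * C) (Tq q ν) := by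
  haveI := hν.1
  have hσ : Lawful 2 (2 * C) (sig ν) := lawful_sig h1C hν
  haveI := hσ.1
  have hm2 : Lawful 1 ((1/2) * (2 * C)) (Measure.map Pop ((sig ν).prod (sig ν))) :=
    lawful_map_bin goodOp_Pop (by linarith) hσ hσ
  have hm2' : Lawful 1 (2 * C) (Measure.map Pop ((sig ν).prod (sig ν))) :=
    hm2.mono (by linarith)
  have hm1 : Lawful 1 (2 * C) (sig ν) := hσ.monoAnchor one_le_two
  haveI := hm2'.1
  rw [Tq_eq]
  constructor
  · constructor
    rw [Measure.add_apply, Measure.smul_apply, Measure.smul_apply, hm1.1.measure_univ,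
      hm2'.1.measure_univ, smul_eq_mul, smul_eq_mul, mul_one, mul_one,
      ← ENNReal.ofReal_add (by linarith [hq.2]) (le_of_lt hq.1)]
    norm_num
  · rw [Measure.add_apply, Measure.smul_apply, Measure.smul_apply, hm1.2, hm2'.2]
    simp

lemma ord_sig {C C' : ℝ} (h1C : 1 ≤ C) (h1C' : 1 ≤ C') {ν ρ : Measure ℝ}
    (hν : Lawful 1 C ν) (hρ : Lawful 1 C' ρ) (hord : Ord 1 ν ρ) :
    Ord 2 (sig ν) (sig ρ) := by
  intro f hf
  haveI := hν.1; haveI := hρ.1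
  rw [integral_sig hf.1, integral_sig hf.1]
  exact bin_le (goodOp_add one_pos) h1C h1C' hν hρ hord (by simpa using hf)

lemma ord_Tq {q C C' : ℝ} (hq : q ∈ Set.Ioo (0:ℝ) 1) (h1C : 1 ≤ C) (h1C' : 1 ≤ C')
    {ν ρ : Measure ℝ} (hν : Lawful 1 C ν) (hρ : Lawful 1 C' ρ) (hord : Ord 1 ν ρ) :
    Ord 1 (Tq q ν) (Tq q ρ) := by
  intro f hf
  haveI := hν.1; haveI := hρ.1
  have hσν : Lawful 2 (2 * C) (sig ν) := lawful_sig h1C hν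
  have hσρ : Lawful 2 (2 * C') (sig ρ) := lawful_sig h1C' hρ
  haveI := hσν.1; haveI := hσρ.1
  rw [integral_Tq hq.1.le hq.2.le hf.1
      (integrable_comp_op (goodOp_add one_pos) h1C h1C hν hν hf (by norm_num))
      (integrable_comp_op goodOp_Pop (by linarith) (by linarith) hσν hσν hf le_rfl),
    integral_Tq hq.1.le hq.2.le hf.1
      (integrable_comp_op (goodOp_add one_pos) h1C' h1C' hρ hρ hf (by norm_num))
      (integrable_comp_op goodOp_Pop (by linarith) (by linarith) hσρ hσρ hf le_rfl)]
  have t1 : ∫ p, f (Sfun p) ∂(ν.prod ν) ≤ ∫ p, f (Sfun p) ∂(ρ.prod ρ) :=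
    bin_le (goodOp_add one_pos) h1C h1C' hν hρ hord (hf.weaken (by norm_num))
  have t2 : ∫ p, f (Pop p) ∂((sig ν).prod (sig ν)) ≤
      ∫ p, f (Pop p) ∂((sig ρ).prod (sig ρ)) :=
    bin_le goodOp_Pop (by linarith) (by linarith) hσν hσρ
      (ord_sig h1C h1C' hν hρ hord) hf
  have hq1 : (0:ℝ) ≤ 1 - q := by linarith [hq.2]
  nlinarith [mul_le_mul_of_nonneg_left t1 hq1, mul_le_mul_of_nonneg_left t2 hq.1.le]

lemma testF_id (t : ℝ) : TestF t (fun z => z) :=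
  ⟨measurable_id, fun _ _ _ _ h => h, concaveOn_id (convex_Ici t)⟩

lemma integrable_id_lawful {t C : ℝ} {ν : Measure ℝ} (hν : Lawful t C ν) :
    Integrable (fun z : ℝ => z) ν := by
  refine hν.integrable aestronglyMeasurable_id (M := max |t| |C|) ?_
  intro z hz
  rw [abs_le]
  constructor
  · have := neg_abs_le t; have := le_max_left |t| |C|; linarith [hz.1]
  · have := le_abs_self C; have := le_max_right |t| |C|; linarith [hz.2]

lemma mean_mem {t C : ℝ} (htC : t ≤ C) {ν : Measure ℝ} (hν : Lawful t C ν) :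
    ∫ z, z ∂ν ∈ Set.Icc t C := by
  haveI := hν.1
  have hid := integrable_id_lawful hν
  constructor
  · have : ∫ _z, t ∂ν ≤ ∫ z, z ∂ν := by
      refine integral_mono_ae (integrable_const t) hid ?_
      filter_upwards [hν.ae] with z hz using hz.1
    simpa using this
  · have : ∫ z, z ∂ν ≤ ∫ _z, C ∂ν := by
      refine integral_mono_ae hid (integrable_const C) ?_
      filter_upwards [hν.ae] with z hz using hz.2
    simpa using this

/-- Jensen via a supporting line: a lawful measure is dominated by the Dirac mass at
its mean in the increasing concave order. -/
lemma ord_dirac_mean {C : ℝ} {ν : Measure ℝ} (h1C : 1 ≤ C) (hν : Lawful 1 C ν)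
    (hM : 1 < ∫ z, z ∂ν) : Ord 1 ν (Measure.dirac (∫ z, z ∂ν)) := by
  intro f hf
  haveI := hν.1
  set M := ∫ z, z ∂ν with hMdef
  rw [integral_dirac]
  set Sl : Set ℝ := (fun w => (f w - f M) / (w - M)) '' Set.Ioi M with hSl
  have hne : Sl.Nonempty := ⟨_, ⟨M + 1, by simp, rfl⟩⟩
  have hMmem : M ∈ Set.Ici (1:ℝ) := Set.mem_Ici.mpr hM.le
  have hbdd : BddAbove Sl := by
    refine ⟨(f M - f 1) / (M - 1), ?_⟩
    rintro r ⟨w, hw, rfl⟩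
    exact hf.2.2.slope_anti_adjacent (Set.mem_Ici.mpr le_rfl)
      (Set.mem_Ici.mpr (le_of_lt (lt_trans hM hw))) hM hw
  set sl := sSup Sl with hsl
  have hline : ∀ z ∈ Set.Icc (1:ℝ) C, f z ≤ f M + sl * (z - M) := by
    intro z hz
    rcases lt_trichotomy z M with hlt | heq | hgt
    · have h1 : sl ≤ (f M - f z) / (M - z) := by
        refine csSup_le hne ?_
        rintro r ⟨w, hw, rfl⟩
        exact hf.2.2.slope_anti_adjacent (Set.mem_Ici.mpr hz.1)
          (Set.mem_Ici.mpr (le_of_lt (lt_trans hM hw))) hlt hw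
      have h2 : sl * (M - z) ≤ f M - f z := by
        rw [← le_div_iff₀ (by linarith)]
        exact h1
      have h3 : sl * (z - M) = -(sl * (M - z)) := by ring
      linarith
    · subst heq; simp
    · have h1 : (f z - f M) / (z - M) ≤ sl :=
        le_csSup hbdd ⟨z, Set.mem_Ioi.mpr hgt, rfl⟩
      have h2 : f z - f M ≤ sl * (z - M) := by
        rw [← div_le_iff₀ (by linarith)]
        exact h1
      linarith
  have hfint : Integrable f ν :=
    hν.integrable hf.1.aestronglyMeasurable (M := max |f 1| |f C|)
      (fun z hz => hf.bound le_rfl h1C hz)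
  have hidint := integrable_id_lawful hν
  have heq : (fun z : ℝ => f M + sl * (z - M)) = fun z : ℝ => (f M - sl * M) + sl * z := by
    funext z; ring
  have haff : Integrable (fun z : ℝ => f M + sl * (z - M)) ν := by
    rw [heq]
    exact (integrable_const _).add (hidint.const_mul sl)
  calc ∫ z, f z ∂ν ≤ ∫ z, (f M + sl * (z - M)) ∂ν := by
        refine integral_mono_ae hfint haff ?_
        filter_upwards [hν.ae] with z hz using hline z hz
    _ = f M := by
        rw [heq, integral_add (integrable_const _) (hidint.const_mul sl), integral_const,
          integral_const_mul, ← hMdef]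
        simp [hν.1.measure_univ]

/-- homogeneity: `Tq` commutes with scaling -/
lemma Tq_map_scale {c : ℝ} (hc : 0 < c) (q : ℝ) (ν : Measure ℝ) [SFinite ν] :
    Tq q (Measure.map (fun x => c * x) ν) = Measure.map (fun x => c * x) (Tq q ν) := by
  have hmc : Measurable fun x : ℝ => c * x := measurable_id.const_mul c
  have hS : Measure.map Sfun ((Measure.map (fun x => c * x) ν).prod
      (Measure.map (fun x => c * x) ν)) =
      Measure.map (fun x => c * x) (Measure.map Sfun (ν.prod ν)) := by
    rw [Measure.map_prod_map _ _ hmc hmc, Measure.map_map measurable_Sfun (hmc.prodMap hmc),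
      Measure.map_map hmc measurable_Sfun]
    congr 1
    funext p
    obtain ⟨x, y⟩ := p
    simp only [Function.comp_apply, Prod.map_apply, Sfun]
    ring
  have hD : Measure.map Dfun ((Measure.map (fun x => c * x) ν).prod
      ((Measure.map (fun x => c * x) ν).prod
        ((Measure.map (fun x => c * x) ν).prod (Measure.map (fun x => c * x) ν)))) =
      Measure.map (fun x => c * x) (Measure.map Dfun (ν.prod (ν.prod (ν.prod ν)))) := by
    rw [Measure.map_prod_map _ _ hmc hmc,
      Measure.map_prod_map _ _ hmc (hmc.prodMap hmc),
      Measure.map_prod_map _ _ hmc (hmc.prodMap (hmc.prodMap hmc)),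
      Measure.map_map measurable_Dfun (hmc.prodMap (hmc.prodMap (hmc.prodMap hmc))),
      Measure.map_map hmc measurable_Dfun]
    congr 1
    funext p
    obtain ⟨x1, x2, x3, x4⟩ := p
    simp only [Function.comp_apply, Prod.map_apply, Dfun]
    have h1 : (c * x1 + c * x2) * (c * x3 + c * x4) = c * (c * ((x1 + x2) * (x3 + x4))) := by
      ring
    have h2 : c * x1 + c * x2 + c * x3 + c * x4 = c * (x1 + x2 + x3 + x4) := by ring
    rw [h1, h2, mul_div_assoc, mul_div_mul_left _ _ (ne_of_gt hc)]
  unfold Tq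
  rw [hS, hD, Measure.map_add _ _ hmc, Measure.map_smul, Measure.map_smul]

lemma mu_succ (q : ℝ) (n : ℕ) : mu q (n + 1) = Tq q (mu q n) := by
  unfold mu; rw [Function.iterate_succ_apply']

lemma lawful_mu {q : ℝ} (hq : q ∈ Set.Ioo (0:ℝ) 1) (n : ℕ) :
    Lawful 1 ((2:ℝ) ^ n) (mu q n) := by
  induction n with
  | zero => simpa [mu] using lawful_dirac le_rfl
  | succ n ih =>
      rw [mu_succ]
      have h2 : (1:ℝ) ≤ 2 ^ n := one_le_pow₀ (by norm_num)
      have := lawful_Tq hq h2 ih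
      rw [pow_succ, mul_comm ((2:ℝ) ^ n) 2]
      exact this

lemma iterate_dirac_scale {q : ℝ} (hq : q ∈ Set.Ioo (0:ℝ) 1) {c : ℝ} (hc : 0 < c) (n : ℕ) :
    (Tq q)^[n] (Measure.dirac c) = Measure.map (fun x => c * x) (mu q n) := by
  induction n with
  | zero =>
      have hmc : Measurable fun x : ℝ => c * x := measurable_id.const_mul c
      simp only [Function.iterate_zero_apply, mu]
      rw [Measure.map_dirac' hmc 1]
      simp
  | succ n ih =>
      rw [Function.iterate_succ_apply', ih, mu_succ]
      haveI := (lawful_mu hq n).1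
      exact Tq_map_scale hc q (mu q n)

lemma mean_map_scale (c : ℝ) (ν : Measure ℝ) :
    ∫ z, z ∂(Measure.map (fun x => c * x) ν) = c * ∫ z, z ∂ν := by
  have hmc : Measurable fun x : ℝ => c * x := measurable_id.const_mul c
  rw [integral_map (f := fun z : ℝ => z) hmc.aemeasurable
    measurable_id.aestronglyMeasurable]
  exact integral_const_mul c _

lemma mean_Tq_ge {q : ℝ} (hq : q ∈ Set.Ioo (0:ℝ) 1) {C : ℝ} (h1C : 1 ≤ C) {ν : Measure ℝ}
    (hν : Lawful 1 C ν) : 2 - q ≤ ∫ z, z ∂(Tq q ν) := by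
  haveI := hν.1
  have hσ := lawful_sig h1C hν
  haveI := hσ.1
  have iS : Integrable (fun p => Sfun p) (ν.prod ν) :=
    integrable_comp_op (goodOp_add one_pos) h1C h1C hν hν (testF_id 1) (by norm_num)
  have iP : Integrable (fun p => Pop p) ((sig ν).prod (sig ν)) :=
    integrable_comp_op goodOp_Pop (by linarith) (by linarith) hσ hσ (testF_id 1) le_rfl
  rw [integral_Tq (f := fun z : ℝ => z) hq.1.le hq.2.le measurable_id iS iP]
  have hS2 : (2:ℝ) ≤ ∫ p, Sfun p ∂(ν.prod ν) := by
    have h : ∫ _p, (2:ℝ) ∂(ν.prod ν) ≤ ∫ p, Sfun p ∂(ν.prod ν) := by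
      refine integral_mono_ae (integrable_const 2) iS ?_
      filter_upwards [prod_box_ae measurableSet_Icc measurableSet_Icc hν.2 hν.2] with p hp
      simp only [Sfun]
      linarith [hp.1.1, hp.2.1]
    simpa using h
  have hP1 : (1:ℝ) ≤ ∫ p, Pop p ∂((sig ν).prod (sig ν)) := by
    have h : ∫ _p, (1:ℝ) ∂((sig ν).prod (sig ν)) ≤ ∫ p, Pop p ∂((sig ν).prod (sig ν)) := by
      refine integral_mono_ae (integrable_const 1) iP ?_
      filter_upwards [prod_box_ae measurableSet_Icc measurableSet_Icc hσ.2 hσ.2] with p hp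
      exact goodOp_Pop.mem p.1 (Set.mem_Ici.mpr hp.1.1) p.2 (Set.mem_Ici.mpr hp.2.1)
    simpa using h
  nlinarith [mul_le_mul_of_nonneg_left hS2 (by linarith [hq.2] : (0:ℝ) ≤ 1 - q),
    mul_le_mul_of_nonneg_left hP1 hq.1.le]

lemma ord_iterate {q : ℝ} (hq : q ∈ Set.Ioo (0:ℝ) 1) (n : ℕ) :
    ∀ {C C' : ℝ} {ν ρ : Measure ℝ}, 1 ≤ C → 1 ≤ C' → Lawful 1 C ν → Lawful 1 C' ρ →
      Ord 1 ν ρ → Ord 1 ((Tq q)^[n] ν) ((Tq q)^[n] ρ) := by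
  induction n with
  | zero => intro C C' ν ρ _ _ _ _ h; simpa using h
  | succ n ih =>
      intro C C' ν ρ h1C h1C' hν hρ hord
      rw [Function.iterate_succ_apply, Function.iterate_succ_apply]
      exact ih (by linarith : (1:ℝ) ≤ 2 * C) (by linarith : (1:ℝ) ≤ 2 * C')
        (lawful_Tq hq h1C hν) (lawful_Tq hq h1C' hρ) (ord_Tq hq h1C h1C' hν hρ hord)

lemma mean_mu_zero (q : ℝ) : ∫ z, z ∂(mu q 0) = 1 := by
  simp [mu]

lemma submult {q : ℝ} (hq : q ∈ Set.Ioo (0:ℝ) 1) (n m : ℕ) :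
    ∫ z, z ∂(mu q (n + m)) ≤ (∫ z, z ∂(mu q n)) * ∫ z, z ∂(mu q m) := by
  by_cases hm : m = 0
  · subst hm
    rw [mean_mu_zero, Nat.add_zero, mul_one]
  · set M := ∫ z, z ∂(mu q m) with hMdef
    have hlawm := lawful_mu hq m
    have h2m : (1:ℝ) ≤ 2 ^ m := one_le_pow₀ (by norm_num)
    have hM1 : 1 < M := by
      obtain ⟨m', rfl⟩ : ∃ m', m = m' + 1 := ⟨m - 1, by omega⟩
      have h2m' : (1:ℝ) ≤ 2 ^ m' := one_le_pow₀ (by norm_num)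
      have := mean_Tq_ge hq h2m' (lawful_mu hq m')
      rw [hMdef, mu_succ]
      linarith [hq.2]
    have hordm : Ord 1 (mu q m) (Measure.dirac M) := ord_dirac_mean h2m hlawm hM1
    have hiter : Ord 1 ((Tq q)^[n] (mu q m)) ((Tq q)^[n] (Measure.dirac M)) :=
      ord_iterate hq n h2m hM1.le hlawm (lawful_dirac hM1.le) hordm
    have hkey : mu q (n + m) = (Tq q)^[n] (mu q m) := by
      unfold mu; rw [Function.iterate_add_apply]
    have hscale : (Tq q)^[n] (Measure.dirac M) =
        Measure.map (fun x => M * x) (mu q n) :=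
      iterate_dirac_scale hq (by linarith) n
    calc ∫ z, z ∂(mu q (n + m)) = ∫ z, z ∂((Tq q)^[n] (mu q m)) := by rw [hkey]
      _ ≤ ∫ z, z ∂((Tq q)^[n] (Measure.dirac M)) := hiter _ (testF_id 1)
      _ = M * ∫ z, z ∂(mu q n) := by rw [hscale, mean_map_scale]
      _ = (∫ z, z ∂(mu q n)) * M := mul_comm _ _

end RQAux

open RQAux in
theorem stmt1 (q : ℝ) (hq : q ∈ Set.Ioo (0 : ℝ) 1) :
    (∀ n m : ℕ, ∫ z, z ∂(mu q (n + m)) ≤ (∫ z, z ∂(mu q n)) * ∫ z, z ∂(mu q m)) ∧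
    ∃ α : ℝ, 0 ≤ α ∧ α ≤ Real.log 2 ∧
      Tendsto (fun n : ℕ => (1 / (n : ℝ)) * Real.log (∫ z, z ∂(mu q n))) atTop (nhds α) := by
  have ha1 : ∀ n, 1 ≤ ∫ z, z ∂(mu q n) := fun n =>
    (mean_mem (one_le_pow₀ (by norm_num)) (lawful_mu hq n)).1
  have haU : ∀ n, ∫ z, z ∂(mu q n) ≤ 2 ^ n := fun n =>
    (mean_mem (one_le_pow₀ (by norm_num)) (lawful_mu hq n)).2
  refine ⟨submult hq, ?_⟩
  set u : ℕ → ℝ := fun n => Real.log (∫ z, z ∂(mu q n)) with hu_def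
  have hu : Subadditive u := by
    intro n m
    have h := submult hq n m
    calc u (n + m) ≤ Real.log ((∫ z, z ∂(mu q n)) * ∫ z, z ∂(mu q m)) :=
          Real.log_le_log (by linarith [ha1 (n + m)]) h
      _ = u n + u m := Real.log_mul (by linarith [ha1 n]) (by linarith [ha1 m])
  have hun : ∀ n, 0 ≤ u n := fun n => Real.log_nonneg (ha1 n)
  have hbdd : BddBelow (Set.range fun n : ℕ => u n / n) := by
    refine ⟨0, ?_⟩
    rintro x ⟨n, rfl⟩
    have := hun n
    positivity
  have htend := hu.tendsto_lim hbdd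
  refine ⟨hu.lim, ?_, ?_, ?_⟩
  · refine ge_of_tendsto' htend (fun n => ?_)
    have := hun n
    positivity
  · refine le_of_tendsto' htend (fun n => ?_)
    rcases Nat.eq_zero_or_pos n with h0 | hpos
    · subst h0
      simp only [Nat.cast_zero, div_zero]
      exact Real.log_nonneg one_le_two
    · rw [div_le_iff₀ (by positivity)]
      calc u n ≤ Real.log (2 ^ n) :=
            Real.log_le_log (by linarith [ha1 n]) (haU n)
        _ = n * Real.log 2 := by rw [Real.log_pow]
        _ = Real.log 2 * n := mul_comm _ _
  · have heq : (fun n : ℕ => (1 / (n : ℝ)) * Real.log (∫ z, z ∂(mu q n))) =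
        fun n : ℕ => u n / n := by
      funext n
      rw [one_div_mul_eq_div]
    rw [heq]
    exact htend
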